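/- Let x and y be positive integers, let H be an (x,y)-grained gadget with parts K', K'', S', S'', let G be a finite graph containing H as an induced subgraph that respects the structure of H, and let [A,B] be a maximum cut of G. Let t be the number of vertices in V(G) \ V(H) adjacent to some vertex of H, let ℓ be the number of vertices of G adjacent to some vertex in S', and let r be the number of vertices of G adjacent to some vertex in S''. If ℓ and r are odd, y > 2t, and x > t + 2y, then either S' ⊆ A and K' ⊆ B, or S' ⊆ B and K' ⊆ A. -/

import Mathlib

/-- Size of the cut-set of the cut `[A,B]`. -/
noncomputable def cutSize {V : Type} (G : SimpleGraph V) (A B : Set V) : ℕ :=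
  {p : V × V | p.1 ∈ A ∧ p.2 ∈ B ∧ G.Adj p.1 p.2}.ncard

/-- `[A,B]` is a maximum cut of `G`. -/
def IsMaxCut {V : Type} (G : SimpleGraph V) (A B : Set V) : Prop :=
  A ∪ B = Set.univ ∧ Disjoint A B ∧
    ∀ A' B' : Set V, A' ∪ B' = Set.univ → Disjoint A' B' →
      cutSize G A' B' ≤ cutSize G A B

/-- `G` restricted to `K1 ∪ K2 ∪ S1 ∪ S2` is an `(x,y)`-grained gadget. -/
structure IsGrainedGadget {V : Type} (G : SimpleGraph V) (x y : ℕ)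
    (K1 K2 S1 S2 : Set V) : Prop where
  dK1K2 : Disjoint K1 K2
  dK1S1 : Disjoint K1 S1
  dK1S2 : Disjoint K1 S2
  dK2S1 : Disjoint K2 S1
  dK2S2 : Disjoint K2 S2
  dS1S2 : Disjoint S1 S2
  cardK1 : K1.ncard = y
  cardK2 : K2.ncard = y
  cardS1 : S1.ncard = x
  cardS2 : S2.ncard = x
  adj : ∀ u ∈ K1 ∪ K2 ∪ S1 ∪ S2, ∀ v ∈ K1 ∪ K2 ∪ S1 ∪ S2, u ≠ v →
    (G.Adj u v ↔ ((u ∈ K1 ∪ K2 ∧ v ∈ K1 ∪ K2) ∨ (u ∈ K1 ∧ v ∈ S1) ∨ (u ∈ S1 ∧ v ∈ K1)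
      ∨ (u ∈ K2 ∧ v ∈ S2) ∨ (u ∈ S2 ∧ v ∈ K2)))

/-- `G` respects the structure of the grained gadget with parts `K1, K2, S1, S2`. -/
def RespectsStructure {V : Type} (G : SimpleGraph V) (K1 K2 S1 S2 : Set V) : Prop :=
  ∀ u, u ∉ K1 ∪ K2 ∪ S1 ∪ S2 →
    G.neighborSet u ∩ (K1 ∪ K2 ∪ S1 ∪ S2) = ∅ ∨
    G.neighborSet u ∩ (K1 ∪ K2 ∪ S1 ∪ S2) = K1 ∪ K2 ∪ S1 ∪ S2 ∨
    G.neighborSet u ∩ (K1 ∪ K2 ∪ S1 ∪ S2) = K1 ∨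
    G.neighborSet u ∩ (K1 ∪ K2 ∪ S1 ∪ S2) = K2 ∨
    G.neighborSet u ∩ (K1 ∪ K2 ∪ S1 ∪ S2) = K1 ∪ S1 ∨
    G.neighborSet u ∩ (K1 ∪ K2 ∪ S1 ∪ S2) = K2 ∪ S2


lemma cutSize_comm {V : Type} (G : SimpleGraph V) (A B : Set V) :
    cutSize G A B = cutSize G B A := by
  unfold cutSize
  have h : {p : V × V | p.1 ∈ B ∧ p.2 ∈ A ∧ G.Adj p.1 p.2} =
      Prod.swap '' {p : V × V | p.1 ∈ A ∧ p.2 ∈ B ∧ G.Adj p.1 p.2} := by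
    ext ⟨a, b⟩
    constructor
    · rintro ⟨ha, hb, hadj⟩
      exact ⟨(b, a), ⟨hb, ha, hadj.symm⟩, rfl⟩
    · rintro ⟨⟨u, w⟩, ⟨hu, hw, hadj⟩, heq⟩
      obtain ⟨rfl, rfl⟩ : w = a ∧ u = b := by
        simpa [Prod.ext_iff] using heq
      exact ⟨hw, hu, hadj.symm⟩
  rw [h, Set.ncard_image_of_injective _ Prod.swap_injective]

lemma isMaxCut_symm {V : Type} (G : SimpleGraph V) (A B : Set V)
    (h : IsMaxCut G A B) : IsMaxCut G B A := by
  obtain ⟨h1, h2, h3⟩ := h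
  refine ⟨by rw [Set.union_comm]; exact h1, h2.symm, fun A' B' hu hd => ?_⟩
  rw [cutSize_comm G B A]
  exact h3 A' B' hu hd

lemma local_opt {V : Type} [Fintype V] (G : SimpleGraph V) (A B : Set V)
    (hmax : IsMaxCut G A B) (v : V) (hv : v ∈ A) :
    (G.neighborSet v ∩ A).ncard ≤ (G.neighborSet v ∩ B).ncard := by
  obtain ⟨hun, hdis, hopt⟩ := hmax
  have hvB : v ∉ B := fun h => Set.disjoint_left.mp hdis hv h
  set E : Set (V × V) := {p : V × V | p.1 ∈ A ∧ p.2 ∈ B ∧ G.Adj p.1 p.2} with hEdef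
  set P : Set (V × V) := {p : V × V | (p.1 ∈ A ∧ p.2 ∈ B ∧ G.Adj p.1 p.2) ∧ p.1 = v} with hPdef
  set Q : Set (V × V) := {p : V × V | p.1 ∈ A ∧ p.2 = v ∧ G.Adj p.1 v} with hQdef
  have hun' : (A \ {v}) ∪ (B ∪ {v}) = Set.univ := by
    ext u
    simp only [Set.mem_union, Set.mem_diff, Set.mem_singleton_iff, Set.mem_univ, iff_true]
    have hu : u ∈ A ∪ B := hun ▸ Set.mem_univ u
    rcases Set.mem_union _ _ _ |>.mp hu with h | h <;> by_cases he : u = v <;> tauto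
  have hdis' : Disjoint (A \ {v}) (B ∪ {v}) := by
    rw [Set.disjoint_union_right]
    constructor
    · exact (Set.disjoint_left.mpr fun a ha hb => Set.disjoint_left.mp hdis ha.1 hb)
    · exact Set.disjoint_left.mpr fun a ha hb => ha.2 hb
  have hE' : {p : V × V | p.1 ∈ A \ {v} ∧ p.2 ∈ B ∪ {v} ∧ G.Adj p.1 p.2} = (E \ P) ∪ Q := by
    ext ⟨a, b⟩
    simp only [Set.mem_setOf_eq, Set.mem_diff, Set.mem_union, Set.mem_singleton_iff,
      hEdef, hPdef, hQdef]
    constructor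
    · rintro ⟨⟨ha, hne⟩, hb | hb, hadj⟩
      · exact Or.inl ⟨⟨ha, hb, hadj⟩, fun h => hne h.2⟩
      · exact Or.inr ⟨ha, hb, hb ▸ hadj⟩
    · rintro (⟨⟨ha, hb, hadj⟩, hP⟩ | ⟨ha, hb, hadj⟩)
      · exact ⟨⟨ha, fun h => hP ⟨⟨ha, hb, hadj⟩, h⟩⟩, Or.inl hb, hadj⟩
      · refine ⟨⟨ha, fun h => G.loopless.irrefl v (h ▸ hadj)⟩, Or.inr hb, hb ▸ hadj⟩
  have hPE : P ⊆ E := fun p hp => hp.1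
  have hdisjEQ : Disjoint (E \ P) Q := by
    refine Set.disjoint_left.mpr ?_
    rintro ⟨a, b⟩ ⟨⟨_, hb, _⟩, _⟩ ⟨_, hbv, _⟩
    exact hvB (hbv ▸ hb)
  have h1 : cutSize G (A \ {v}) (B ∪ {v}) = (E \ P).ncard + Q.ncard := by
    show ({p : V × V | p.1 ∈ A \ {v} ∧ p.2 ∈ B ∪ {v} ∧ G.Adj p.1 p.2}).ncard = _
    rw [hE', Set.ncard_union_eq hdisjEQ (Set.toFinite _) (Set.toFinite _)]
  have h2 : (E \ P).ncard + P.ncard = E.ncard :=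
    Set.ncard_diff_add_ncard_of_subset hPE (Set.toFinite _)
  have hle : cutSize G (A \ {v}) (B ∪ {v}) ≤ cutSize G A B := hopt _ _ hun' hdis'
  have hEcut : cutSize G A B = E.ncard := rfl
  have hQP : Q.ncard ≤ P.ncard := by
    rw [h1, hEcut, ← h2] at hle
    omega
  have hQ : Q = (fun a => (a, v)) '' (G.neighborSet v ∩ A) := by
    ext ⟨a, b⟩
    constructor
    · rintro ⟨ha, hb, hadj⟩
      exact ⟨a, ⟨hadj.symm, ha⟩, Prod.ext rfl hb.symm⟩
    · rintro ⟨u, ⟨hu1, hu2⟩, heq⟩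
      obtain ⟨rfl, rfl⟩ : u = a ∧ v = b := by simpa [Prod.ext_iff] using heq
      exact ⟨hu2, rfl, hu1.symm⟩
  have hP : P = (fun b => (v, b)) '' (G.neighborSet v ∩ B) := by
    ext ⟨a, b⟩
    constructor
    · rintro ⟨⟨ha, hb, hadj⟩, h1'⟩
      have : a = v := h1'
      subst this
      exact ⟨b, ⟨hadj, hb⟩, rfl⟩
    · rintro ⟨u, ⟨hu1, hu2⟩, heq⟩
      obtain ⟨rfl, rfl⟩ : v = a ∧ u = b := by simpa [Prod.ext_iff] using heq
      exact ⟨⟨hv, hu2, hu1⟩, rfl⟩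
  have hQc : Q.ncard = (G.neighborSet v ∩ A).ncard := by
    rw [hQ]
    exact Set.ncard_image_of_injective _ (fun a b h => congrArg Prod.fst h)
  have hPc : P.ncard = (G.neighborSet v ∩ B).ncard := by
    rw [hP]
    exact Set.ncard_image_of_injective _ (fun a b h => congrArg Prod.snd h)
  rw [← hQc, ← hPc]
  exact hQP

/-- in a maximum cut of a graph respecting the structure of an
`(x,y)`-grained gadget (with the stated numeric conditions), `S'` and `K'`
lie in opposite parts. -/
theorem grained_gadget_S1_K1_opposite {V : Type} [Fintype V] (G : SimpleGraph V)
    (x y : ℕ) (hx : 0 < x) (hy : 0 < y) (K1 K2 S1 S2 : Set V)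
    (hH : IsGrainedGadget G x y K1 K2 S1 S2)
    (hresp : RespectsStructure G K1 K2 S1 S2)
    (A B : Set V) (hmax : IsMaxCut G A B)
    (t l r : ℕ)
    (ht : t = {u | u ∉ K1 ∪ K2 ∪ S1 ∪ S2 ∧ ∃ v ∈ K1 ∪ K2 ∪ S1 ∪ S2, G.Adj u v}.ncard)
    (hl : l = {u | ∃ v ∈ S1, G.Adj u v}.ncard)
    (hr : r = {u | ∃ v ∈ S2, G.Adj u v}.ncard)
    (hlodd : Odd l) (hrodd : Odd r) (hyt : y > 2 * t) (hxty : x > t + 2 * y) :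
    (S1 ⊆ A ∧ K1 ⊆ B) ∨ (S1 ⊆ B ∧ K1 ⊆ A) := by
  set Hs : Set V := K1 ∪ K2 ∪ S1 ∪ S2 with hHs
  set N : Set V := {u | ∃ v ∈ S1, G.Adj u v} with hNdef
  set T : Set V := {u | u ∉ Hs ∧ ∃ v ∈ Hs, G.Adj u v} with hTdef
  have hS1H : S1 ⊆ Hs := fun s hs => Or.inl (Or.inr hs)
  have hK1H : K1 ⊆ Hs := fun k hk => Or.inl (Or.inl (Or.inl hk))
  -- every vertex of S1 has neighborhood exactly N
  have hNb : ∀ s ∈ S1, G.neighborSet s = N := by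
    intro s hs
    ext u
    simp only [SimpleGraph.mem_neighborSet, hNdef, Set.mem_setOf_eq]
    constructor
    · intro h
      exact ⟨s, hs, h.symm⟩
    · rintro ⟨v, hv, hadj⟩
      by_cases hu : u ∈ Hs
      · have hcases := (hH.adj u hu v (hS1H hv) (G.ne_of_adj hadj)).mp hadj
        have huK1 : u ∈ K1 := by
          rcases hcases with ⟨_, h⟩ | ⟨h, _⟩ | ⟨_, h⟩ | ⟨_, h⟩ | ⟨_, h⟩
          · rcases h with h | h
            · exact (Set.disjoint_left.mp hH.dK1S1 h hv).elim
            · exact (Set.disjoint_left.mp hH.dK2S1 h hv).elim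
          · exact h
          · exact (Set.disjoint_left.mp hH.dK1S1 h hv).elim
          · exact (Set.disjoint_left.mp hH.dS1S2 hv h).elim
          · exact (Set.disjoint_left.mp hH.dK2S1 h hv).elim
        have hne : u ≠ s := fun h => Set.disjoint_left.mp hH.dK1S1 huK1 (h ▸ hs)
        exact (hH.adj s (hS1H hs) u hu (fun h => hne h.symm)).mpr
          (Or.inr (Or.inr (Or.inl ⟨hs, huK1⟩)))
      · have hvmem : v ∈ G.neighborSet u ∩ Hs := ⟨hadj, hS1H hv⟩
        rcases hresp u hu with h | h | h | h | h | h
        · rw [h] at hvmem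
          exact absurd hvmem (Set.notMem_empty v)
        · have hsm : s ∈ G.neighborSet u ∩ Hs := h ▸ hS1H hs
          exact hsm.1.symm
        · rw [h] at hvmem
          exact (Set.disjoint_left.mp hH.dK1S1 hvmem hv).elim
        · rw [h] at hvmem
          exact (Set.disjoint_left.mp hH.dK2S1 hvmem hv).elim
        · have hsm : s ∈ G.neighborSet u ∩ Hs := h ▸ Or.inr hs
          exact hsm.1.symm
        · rw [h] at hvmem
          rcases hvmem with h' | h'
          · exact (Set.disjoint_left.mp hH.dK2S1 h' hv).elim
          · exact (Set.disjoint_left.mp hH.dS1S2 hv h').elim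
  -- l = |N ∩ A| + |N ∩ B|, odd, hence the two sides differ
  have hNsplit : (N ∩ A).ncard + (N ∩ B).ncard = l := by
    rw [hl, ← Set.ncard_union_eq
      ((hmax.2.1.mono (Set.inter_subset_right) (Set.inter_subset_right)))
      (Set.toFinite _) (Set.toFinite _)]
    congr 1
    rw [← Set.inter_union_distrib_left, hmax.1, Set.inter_univ]
  have hNne : (N ∩ A).ncard ≠ (N ∩ B).ncard := by
    obtain ⟨c, hc⟩ := hlodd
    omega
  -- S1 lies entirely in one side
  have hS1side : S1 ⊆ A ∨ S1 ⊆ B := by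
    by_contra hcon
    push_neg at hcon
    obtain ⟨s, hs, hsA⟩ := Set.not_subset.mp hcon.1
    obtain ⟨s', hs', hsB⟩ := Set.not_subset.mp hcon.2
    have hsB' : s ∈ B := by
      rcases (show s ∈ A ∪ B from hmax.1 ▸ Set.mem_univ s) with h | h
      · exact absurd h hsA
      · exact h
    have hs'A : s' ∈ A := by
      rcases (show s' ∈ A ∪ B from hmax.1 ▸ Set.mem_univ s') with h | h
      · exact h
      · exact absurd h hsB
    have e1 := local_opt G A B hmax s' hs'A
    have e2 := local_opt G B A (isMaxCut_symm G A B hmax) s hsB'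
    rw [hNb s' hs'] at e1
    rw [hNb s hs] at e2
    exact hNne (le_antisymm e1 e2)
  -- if S1 is in one side, K1 is in the other
  have key : ∀ A' B' : Set V, IsMaxCut G A' B' → S1 ⊆ A' → K1 ⊆ B' := by
    intro A' B' hm hS1 k hk
    rcases (show k ∈ A' ∪ B' from hm.1 ▸ Set.mem_univ k) with hkA | hkB
    · exfalso
      have hloc := local_opt G A' B' hm k hkA
      have hlow : S1 ⊆ G.neighborSet k ∩ A' := by
        intro s hs
        have hne : k ≠ s := fun h => Set.disjoint_left.mp hH.dK1S1 hk (h ▸ hs)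
        exact ⟨(hH.adj k (hK1H hk) s (hS1H hs) hne).mpr (Or.inr (Or.inl ⟨hk, hs⟩)), hS1 hs⟩
      have hx1 : x ≤ (G.neighborSet k ∩ A').ncard := by
        rw [← hH.cardS1]
        exact Set.ncard_le_ncard hlow (Set.toFinite _)
      have hup : G.neighborSet k ∩ B' ⊆ (K1 ∪ K2) ∪ T := by
        rintro u ⟨hadj, huB⟩
        have hadj' : G.Adj k u := hadj
        by_cases hu : u ∈ Hs
        · have hcases := (hH.adj k (hK1H hk) u hu (G.ne_of_adj hadj')).mp hadj'
          rcases hcases with ⟨_, h⟩ | ⟨_, h⟩ | ⟨h, _⟩ | ⟨h, _⟩ | ⟨h, _⟩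
          · exact Or.inl h
          · exact (Set.disjoint_left.mp hm.2.1 (hS1 h) huB).elim
          · exact (Set.disjoint_left.mp hH.dK1S1 hk h).elim
          · exact (Set.disjoint_left.mp hH.dK1K2 hk h).elim
          · exact (Set.disjoint_left.mp hH.dK1S2 hk h).elim
        · exact Or.inr ⟨hu, k, hK1H hk, hadj'.symm⟩
      have hx2 : (G.neighborSet k ∩ B').ncard ≤ 2 * y + t := by
        calc (G.neighborSet k ∩ B').ncard
            ≤ ((K1 ∪ K2) ∪ T).ncard := Set.ncard_le_ncard hup (Set.toFinite _)
          _ ≤ (K1 ∪ K2).ncard + T.ncard := Set.ncard_union_le _ _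
          _ ≤ (K1.ncard + K2.ncard) + T.ncard :=
              Nat.add_le_add_right (Set.ncard_union_le _ _) _
          _ = 2 * y + t := by rw [hH.cardK1, hH.cardK2, ← ht]; ring
      omega
    · exact hkB
  rcases hS1side with h | h
  · exact Or.inl ⟨h, key A B hmax h⟩
  · exact Or.inr ⟨h, key B A (isMaxCut_symm G A B hmax) h⟩
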